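/- Let ρ > 1 and let {a_j}_{j∈ℤ} be a ρ-lacunary sequence of positive numbers, i.e. a_{j+1}/a_j ≥ ρ for all j. Then there exists a sequence {η_k}_{k∈ℤ} of positive numbers satisfying ρ ≤ η_{k+1}/η_k ≤ ρ² for all k, such that {a_j : j ∈ ℤ} ⊆ {η_k : k ∈ ℤ}. -/

import Mathlib

open Real

theorem stmt_9 (ρ : ℝ) (hρ : 1 < ρ) (a : ℤ → ℝ) (ha : ∀ j, 0 < a j)
    (hlac : ∀ j, ρ ≤ a (j + 1) / a j) :
    ∃ η : ℤ → ℝ, (∀ k, 0 < η k) ∧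
      (∀ k, ρ ≤ η (k + 1) / η k ∧ η (k + 1) / η k ≤ ρ ^ 2) ∧
      ∀ j, ∃ k, η k = a j := by
  have hρ0 : (0:ℝ) < ρ := lt_trans one_pos hρ
  have hρ1 : ρ ≠ 1 := ne_of_gt hρ
  set r : ℤ → ℝ := fun j => a (j+1) / a j with hr_def
  have hr_pos : ∀ j, 0 < r j := fun j => div_pos (ha _) (ha _)
  have hrρ : ∀ j, ρ ≤ r j := hlac
  set t : ℤ → ℝ := fun j => Real.logb ρ (r j) with ht_def
  have hrt : ∀ j, ρ ^ (t j) = r j := fun j => Real.rpow_logb hρ0 hρ1 (hr_pos j)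
  have ht1 : ∀ j, 1 ≤ t j := by
    intro j
    have h := Real.logb_le_logb_of_le hρ hρ0 (hrρ j)
    rwa [Real.logb_self_eq_one hρ] at h
  -- the number of points to insert in gap j
  set n : ℤ → ℕ := fun j => (⌊t j⌋).toNat with hn_def
  have hn_cast : ∀ j, (n j : ℤ) = ⌊t j⌋ := by
    intro j
    have h1 : (1:ℤ) ≤ ⌊t j⌋ := Int.le_floor.2 (by exact_mod_cast ht1 j)
    exact Int.toNat_of_nonneg (by omega)
  have hn1 : ∀ j, 1 ≤ n j := by
    intro j
    have : (1:ℤ) ≤ (n j : ℤ) := by rw [hn_cast j]; exact Int.le_floor.2 (by exact_mod_cast ht1 j)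
    exact_mod_cast this
  have hn_le : ∀ j, (n j : ℝ) ≤ t j := by
    intro j
    have := Int.floor_le (t j)
    calc (n j : ℝ) = ((n j : ℤ) : ℝ) := by norm_num
    _ = (⌊t j⌋ : ℝ) := by rw [hn_cast j]
    _ ≤ t j := this
  have hn_lt : ∀ j, t j < (n j : ℝ) + 1 := by
    intro j
    have := Int.lt_floor_add_one (t j)
    calc t j < (⌊t j⌋ : ℝ) + 1 := this
    _ = (n j : ℝ) + 1 := by rw [← hn_cast j]; norm_num
  have hn_pos : ∀ j, (0:ℝ) < (n j : ℝ) := by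
    intro j; exact_mod_cast lt_of_lt_of_le one_pos (by exact_mod_cast hn1 j)
  -- the common ratio inside gap j
  set s : ℤ → ℝ := fun j => ρ ^ (t j / (n j : ℝ)) with hs_def
  have hs_pos : ∀ j, 0 < s j := fun j => Real.rpow_pos_of_pos hρ0 _
  have hs_lb : ∀ j, ρ ≤ s j := by
    intro j
    have h1 : (1:ℝ) ≤ t j / (n j : ℝ) := (one_le_div (hn_pos j)).2 (hn_le j)
    calc ρ = ρ ^ (1:ℝ) := (Real.rpow_one ρ).symm
    _ ≤ ρ ^ (t j / (n j : ℝ)) := Real.rpow_le_rpow_left_iff hρ |>.2 h1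
  have hs_ub : ∀ j, s j ≤ ρ ^ 2 := by
    intro j
    have h1 : t j / (n j : ℝ) ≤ 2 := by
      rw [div_le_iff₀ (hn_pos j)]
      have h2 : (1:ℝ) ≤ (n j : ℝ) := by exact_mod_cast hn1 j
      nlinarith [hn_lt j]
    calc s j = ρ ^ (t j / (n j : ℝ)) := rfl
    _ ≤ ρ ^ (2:ℝ) := Real.rpow_le_rpow_left_iff hρ |>.2 h1
    _ = ρ ^ 2 := by rw [← Real.rpow_natCast ρ 2]; norm_num
  have hs_pow : ∀ j, s j ^ (n j : ℤ) = r j := by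
    intro j
    have hne : (n j : ℝ) ≠ 0 := ne_of_gt (hn_pos j)
    rw [zpow_natCast]
    calc (s j) ^ (n j) = (ρ ^ (t j / (n j : ℝ))) ^ ((n j : ℕ) : ℝ) := by
          rw [Real.rpow_natCast]
    _ = ρ ^ (t j / (n j : ℝ) * (n j : ℝ)) := by
          rw [← Real.rpow_mul (le_of_lt hρ0)]
    _ = ρ ^ (t j) := by rw [div_mul_cancel₀ _ hne]
    _ = r j := hrt j
  -- cumulative index function
  set N : ℤ → ℤ := fun j =>
    if 0 ≤ j then (∑ i ∈ Finset.range j.toNat, (n i : ℤ))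
    else -(∑ i ∈ Finset.range (-j).toNat, (n (-(i:ℤ)-1) : ℤ)) with hN_def
  have hN0 : N 0 = 0 := by simp [hN_def]
  have hN_succ : ∀ j, N (j + 1) = N j + (n j : ℤ) := by
    intro j
    rcases le_or_gt 0 j with hj | hj
    · have hj1 : (0:ℤ) ≤ j + 1 := by omega
      simp only [hN_def, if_pos hj, if_pos hj1]
      have : (j+1).toNat = j.toNat + 1 := by omega
      rw [this, Finset.sum_range_succ]
      have hj' : (j.toNat : ℤ) = j := Int.toNat_of_nonneg hj
      rw [hj']
    · rcases lt_or_ge (j+1) 0 with hj1 | hj1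
      · simp only [hN_def, if_neg (not_le.2 hj), if_neg (not_le.2 hj1)]
        have h1 : (-j).toNat = (-(j+1)).toNat + 1 := by omega
        rw [h1, Finset.sum_range_succ]
        have h2 : (-((-(j+1)).toNat : ℤ) - 1) = j := by omega
        rw [h2]
        ring
      · have hj1' : j + 1 = 0 := by omega
        have hj' : j = -1 := by omega
        subst hj'
        simp only [hN_def]
        norm_num
  have hN_mono : StrictMono N := by
    apply strictMono_int_of_lt_succ
    intro j
    rw [hN_succ j]
    have : (1:ℤ) ≤ (n j : ℤ) := by exact_mod_cast hn1 j
    omega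
  have hN_ge : ∀ j : ℤ, 0 ≤ j → j ≤ N j := by
    refine fun j => Int.le_induction (motive := fun i _ => i ≤ N i) (show (0:ℤ) ≤ N 0 by rw [hN0]) (fun m hm ih => ?_) j
    have ih' : m ≤ N m := ih
    show m + 1 ≤ N (m + 1)
    rw [hN_succ m]
    have : (1:ℤ) ≤ (n m : ℤ) := by exact_mod_cast hn1 m
    omega
  have hN_le : ∀ j : ℤ, j ≤ 0 → N j ≤ j := by
    refine fun j => Int.le_induction_down (motive := fun i _ => N i ≤ i) (show N 0 ≤ (0:ℤ) by rw [hN0]) (fun m hm ih => ?_) j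
    have ih' : N m ≤ m := ih
    show N (m - 1) ≤ m - 1
    have h := hN_succ (m - 1)
    rw [sub_add_cancel] at h
    have : (1:ℤ) ≤ (n (m-1) : ℤ) := by exact_mod_cast hn1 (m-1)
    omega
  -- the block index function
  have hJ : ∀ k : ℤ, ∃ j : ℤ, N j ≤ k ∧ ∀ j' : ℤ, N j' ≤ k → j' ≤ j := by
    intro k
    apply Int.exists_greatest_of_bdd
    · refine ⟨max k 0, fun z hz => ?_⟩
      rcases le_or_gt z 0 with h | h
      · exact le_trans h (le_max_right _ _)
      · exact le_trans (le_trans (hN_ge z (le_of_lt h)) hz) (le_max_left _ _)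
    · refine ⟨min k 0, ?_⟩
      exact le_trans (hN_le _ (min_le_right _ _)) (min_le_left _ _)
  choose J hJ1 hJ2 using hJ
  have hJ_lt : ∀ k, k < N (J k + 1) := by
    intro k
    by_contra h
    push_neg at h
    have := hJ2 k (J k + 1) h
    omega
  have hJ_uniq : ∀ k j, N j ≤ k → k < N (j + 1) → J k = j := by
    intro k j h1 h2
    have hle : j ≤ J k := hJ2 k j h1
    by_contra h
    have : j + 1 ≤ J k := by omega
    have := hN_mono.monotone this
    have := hJ1 k
    omega
  have hJN : ∀ j, J (N j) = j := by
    intro j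
    exact hJ_uniq (N j) j le_rfl (hN_mono (by omega))
  -- define η
    -- η k = a (J k) * s (J k) ^ (k - N (J k))
  refine ⟨fun k => a (J k) * s (J k) ^ (k - N (J k)), ?_, ?_, ?_⟩
  · intro k
    exact mul_pos (ha _) (zpow_pos (hs_pos _) _)
  · intro k
    have hkey : a (J (k+1)) * s (J (k+1)) ^ (k + 1 - N (J (k+1)))
        = (a (J k) * s (J k) ^ (k - N (J k))) * s (J k) := by
      rcases lt_or_ge (k + 1) (N (J k + 1)) with h | h
      · have hJk : J (k+1) = J k := hJ_uniq (k+1) (J k) (by have := hJ1 k; omega) h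
        rw [hJk]
        have : k + 1 - N (J k) = (k - N (J k)) + 1 := by ring
        rw [this, zpow_add_one₀ (ne_of_gt (hs_pos _))]
        ring
      · have heq : k + 1 = N (J k + 1) := le_antisymm (by have := hJ_lt k; omega) h
        have hJk1 : J (k+1) = J k + 1 := by rw [heq, hJN]
        have h5 := hN_succ (J k)
        have h1 : k + 1 - N (J (k+1)) = 0 := by rw [hJk1]; omega
        rw [h1, zpow_zero, mul_one, hJk1]
        have h2 : a (J k + 1) = a (J k) * r (J k) := by
          simp only [hr_def]
          rw [mul_comm, div_mul_cancel₀ _ (ne_of_gt (ha (J k)))]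
        rw [h2, ← hs_pow (J k)]
        have h3 : (n (J k) : ℤ) = (k - N (J k)) + 1 := by omega
        rw [h3, zpow_add_one₀ (ne_of_gt (hs_pos _))]
        ring
    beta_reduce
    have hpos : 0 < a (J k) * s (J k) ^ (k - N (J k)) :=
      mul_pos (ha _) (zpow_pos (hs_pos _) _)
    rw [hkey, mul_comm, mul_div_assoc, div_self (ne_of_gt hpos), mul_one]
    exact ⟨hs_lb _, hs_ub _⟩
  · intro j
    refine ⟨N j, ?_⟩
    beta_reduce
    rw [hJN j, sub_self, zpow_zero, mul_one]
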